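/- Let Ω ⊂ ℝ≥0 be a finite set and f : Ω → ℂ. Then lim_{t→+∞} Re(Σ_{ω∈Ω} f(ω)·e^{iωt}) exists (in ℝ) if and only if f(ω) = 0 for every ω ∈ Ω with ω ≠ 0. -/

import Mathlib

open MeasureTheory Filter Set
open scoped Classical

/-- Base-`b` significand: `S_b(x) ∈ [1,b)` with `|x| = S_b(x)·b^k`; `S_b(0)=0`. -/
noncomputable def significand (b : ℕ) (x : ℝ) : ℝ :=
  if x = 0 then 0 else |x| / (b : ℝ) ^ (Int.log b |x|)

/-- `f` is `b`-Benford. -/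
noncomputable def IsBenford (b : ℕ) (f : ℝ → ℝ) : Prop :=
  ∀ s : ℝ, 1 ≤ s → s < (b : ℝ) →
    Tendsto (fun T : ℝ =>
        (volume {t : ℝ | 0 ≤ t ∧ t ≤ T ∧ significand b (f t) ≤ s}).toReal / T)
      atTop (nhds (Real.logb b s))

/-- A subset of the circle `ℝ/ℤ` is an arc if it is the image of an interval. -/
def IsArc (J : Set UnitAddCircle) : Prop :=
  ∃ a c : ℝ, J = (fun x : ℝ => (x : UnitAddCircle)) '' Set.Ico a c

/-- `f` is continuously uniformly distributed mod 1. -/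
noncomputable def CUDMod1 (f : ℝ → ℝ) : Prop :=
  ∀ J : Set UnitAddCircle, IsArc J →
    Tendsto (fun T : ℝ =>
        (volume {t : ℝ | 0 ≤ t ∧ t ≤ T ∧ ((f t : UnitAddCircle) ∈ J)}).toReal / T)
      atTop (nhds ((volume J).toReal))

/-- A sequence (indexed from 1) is uniformly distributed mod 1. -/
noncomputable def UDMod1 (x : ℕ → ℝ) : Prop :=
  ∀ J : Set UnitAddCircle, IsArc J →
    Tendsto (fun N : ℕ =>
        ((Finset.Icc 1 N).filter (fun n => ((x n : UnitAddCircle) ∈ J))).card / (N : ℝ))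
      atTop (nhds ((volume J).toReal))

/-- The set `Δ_W` associated with `W ⊆ ℂ`. -/
noncomputable def deltaSet (W : Set ℂ) : Set ℝ :=
  {x | ∃ z ∈ W, ∃ w ∈ W, x = 1 + (Complex.arg z - Complex.arg w) / (2 * Real.pi)}

/-- `W ⊆ ℂ` is `b`-nonresonant. -/
noncomputable def BNonresonant (b : ℕ) (W : Set ℂ) : Prop :=
  ∀ r : ℝ, 0 < r → (W ∩ {z | ‖z‖ = r}).Nonempty →
    (deltaSet (W ∩ {z | ‖z‖ = r}) ∩ Set.range ((↑) : ℚ → ℝ) = {1}) ∧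
    Real.logb b r ∉ Submodule.span ℚ (deltaSet (W ∩ {z | ‖z‖ = r}))

/-- `Z ⊆ ℂ` is exponentially `b`-nonresonant. -/
noncomputable def ExpBNonresonant (b : ℕ) (Z : Set ℂ) : Prop :=
  ∃ t : ℝ, 0 ≤ t ∧ BNonresonant b ((fun z => Complex.exp (t * z)) '' Z)

/-- The spectrum (set of complex eigenvalues) of a real square matrix. -/
noncomputable def realSpectrum {d : ℕ} (A : Matrix (Fin d) (Fin d) ℝ) : Set ℂ :=
  spectrum ℂ (A.map (algebraMap ℝ ℂ))

lemma geom_avg_zero (z : ℂ) (h1 : ‖z‖ ≤ 1) (hz : z ≠ 1) :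
    Tendsto (fun N : ℕ => ((N : ℝ)⁻¹ : ℝ) • ∑ n ∈ Finset.range N, z ^ n) atTop (nhds 0) := by
  have h3 : Tendsto (fun N : ℕ => (N : ℝ)⁻¹ * (2 / ‖z - 1‖)) atTop (nhds 0) := by
    have h4 : Tendsto (fun N : ℕ => (N : ℝ)⁻¹) atTop (nhds 0) :=
      tendsto_inv_atTop_zero.comp tendsto_natCast_atTop_atTop
    simpa using h4.mul_const (2 / ‖z - 1‖)
  refine squeeze_zero_norm (fun N => ?_) h3
  rw [norm_smul, geom_sum_eq hz]
  have h2 : ‖(z ^ N - 1) / (z - 1)‖ ≤ 2 / ‖z - 1‖ := by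
    rw [norm_div]
    gcongr
    calc ‖z ^ N - 1‖ ≤ ‖z ^ N‖ + ‖(1 : ℂ)‖ := norm_sub_le _ _
      _ ≤ 2 := by
        rw [norm_pow]
        have := pow_le_one₀ (norm_nonneg z) h1 (n := N)
        simp only [norm_one]
        linarith
  calc ‖((N : ℝ)⁻¹ : ℝ)‖ * ‖(z ^ N - 1) / (z - 1)‖
      ≤ ‖((N : ℝ)⁻¹ : ℝ)‖ * (2 / ‖z - 1‖) := by gcongr
    _ = (N : ℝ)⁻¹ * (2 / ‖z - 1‖) := by
        rw [Real.norm_eq_abs, abs_of_nonneg (by positivity)]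

lemma exp_I_mul_ne_one {θ : ℝ} (h0 : θ ≠ 0) (h2 : |θ| < 2 * Real.pi) :
    Complex.exp (Complex.I * θ) ≠ 1 := by
  intro h
  rw [Complex.exp_eq_one_iff] at h
  obtain ⟨n, hn⟩ := h
  have him := congrArg Complex.im hn
  simp [Complex.mul_im] at him
  have hπ := Real.pi_pos
  have habs : |θ| = |(n : ℝ)| * (2 * Real.pi) := by
    rw [him, abs_mul, abs_of_pos (show (0:ℝ) < 2 * Real.pi by linarith)]
  have hn0 : n = 0 := by
    by_contra hne
    have h1 : (1 : ℝ) ≤ |(n : ℝ)| := by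
      have : (1:ℤ) ≤ |n| := Int.one_le_abs hne
      exact_mod_cast this
    nlinarith
  rw [hn0] at him
  simp at him
  exact h0 him

lemma avg_exp_tendsto (α s : ℝ) (hne : α ≠ 0 → Complex.exp (Complex.I * α * s) ≠ 1) :
    Tendsto (fun N : ℕ => ((N : ℝ)⁻¹ : ℝ) •
        ∑ n ∈ Finset.range N, Complex.exp (Complex.I * α * ((n : ℝ) * s)))
      atTop (nhds (if α = 0 then 1 else 0)) := by
  by_cases h0 : α = 0
  · subst h0
    simp only [if_pos rfl]
    refine Tendsto.congr' ?_ (tendsto_const_nhds (x := (1 : ℂ)))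
    filter_upwards [eventually_ge_atTop 1] with N hN
    have hN' : ((N : ℕ) : ℂ) ≠ 0 := Nat.cast_ne_zero.mpr (by omega)
    simp [Complex.real_smul]
    rw [inv_mul_cancel₀ hN']
  · have hterm : ∀ n : ℕ, Complex.exp (Complex.I * α * ((n : ℝ) * s))
        = Complex.exp (Complex.I * α * s) ^ n := by
      intro n
      rw [← Complex.exp_nat_mul]
      congr 1
      push_cast
      ring
    simp only [hterm, if_neg h0]
    apply geom_avg_zero _ _ (hne h0)
    rw [Complex.norm_exp]
    simp

lemma exp_I_shift (a b x y : ℝ) :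
    Complex.exp (Complex.I * ((a + b : ℝ)) * ((x : ℂ) * (y : ℂ)))
      = Complex.exp (Complex.I * a * ((x : ℂ) * (y : ℂ)))
        * Complex.exp (Complex.I * b * ((x : ℂ) * (y : ℂ))) := by
  rw [← Complex.exp_add]
  congr 1
  push_cast
  ring

lemma conj_exp_I (a x y : ℝ) :
    (starRingEnd ℂ) (Complex.exp (Complex.I * a * ((x : ℂ) * (y : ℂ))))
      = Complex.exp (Complex.I * ((-a : ℝ)) * ((x : ℂ) * (y : ℂ))) := by
  rw [← Complex.exp_conj]
  congr 1
  simp [map_mul, Complex.conj_I, Complex.conj_ofReal]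

set_option maxHeartbeats 1000000 in
/-- the real part of a trigonometric polynomial converges at `+∞`
iff all nonzero frequencies have zero coefficients. -/
theorem trig_poly_tendsto_iff (Ω : Finset ℝ) (hΩ : ∀ ω ∈ Ω, 0 ≤ ω) (f : ℝ → ℂ) :
    (∃ L : ℝ, Filter.Tendsto
        (fun t : ℝ => (∑ ω ∈ Ω, f ω * Complex.exp (Complex.I * ω * t)).re)
        Filter.atTop (nhds L)) ↔
      ∀ ω ∈ Ω, ω ≠ 0 → f ω = 0 := by
  constructor
  · rintro ⟨L, hL⟩ ω₀ hω₀ hω₀ne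
    have hω₀pos : 0 < ω₀ := lt_of_le_of_ne (hΩ ω₀ hω₀) (Ne.symm hω₀ne)
    set B : ℝ := Ω.sup' ⟨ω₀, hω₀⟩ id with hBdef
    have hB2 : ∀ ω ∈ Ω, ω ≤ B := fun ω hω => Finset.le_sup' id hω
    have hB1 : 0 < B := lt_of_lt_of_le hω₀pos (hB2 ω₀ hω₀)
    set s : ℝ := 1 / (B + 1) with hsdef
    have hs : 0 < s := by positivity
    have hexp : ∀ α : ℝ, |α| ≤ 2 * B → α ≠ 0 →
        Complex.exp (Complex.I * α * s) ≠ 1 := by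
      intro α hα hα0
      have h1 : Complex.I * (α : ℂ) * (s : ℂ) = Complex.I * ((α * s : ℝ) : ℂ) := by
        push_cast; ring
      rw [h1]
      apply exp_I_mul_ne_one (mul_ne_zero hα0 (ne_of_gt hs))
      have hπ := Real.pi_gt_three
      have hkey : |α * s| ≤ 2 * B * s := by
        rw [abs_mul, abs_of_pos hs]
        exact mul_le_mul_of_nonneg_right hα (le_of_lt hs)
      have : 2 * B * s < 2 := by
        rw [hsdef]
        rw [mul_one_div, div_lt_iff₀ (by linarith)]
        linarith
      linarith
    -- the sequence and its Cesàro averages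
    set g : ℕ → ℝ := fun n =>
      (∑ ω ∈ Ω, f ω * Complex.exp (Complex.I * ω * ((n : ℝ) * s))).re with hgdef
    set e : ℕ → ℂ := fun n => Complex.exp (Complex.I * ((-ω₀ : ℝ)) * ((n : ℝ) * s)) with hedef
    set u : ℕ → ℂ := fun n => ((g n : ℝ) : ℂ) * e n with hudef
    have he1 : ∀ n, ‖e n‖ = 1 := by
      intro n
      rw [hedef]
      simp only []
      rw [Complex.norm_exp]
      simp [Complex.mul_re]
    -- g n → L
    have hns : Tendsto (fun n : ℕ => (n : ℝ) * s) atTop atTop :=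
      Tendsto.atTop_mul_const hs tendsto_natCast_atTop_atTop
    have hgL : Tendsto g atTop (nhds L) := by
      have h5 := hL.comp hns
      simp only [Function.comp_def, Complex.ofReal_mul] at h5
      exact h5
    -- limit A : average of u tends to 0
    have hw : Tendsto (fun n : ℕ => (((g n - L : ℝ)) : ℂ) * e n) atTop (nhds 0) := by
      have habs : Tendsto (fun n : ℕ => |g n - L|) atTop (nhds 0) := by
        have h6 : Tendsto (fun n : ℕ => g n - L) atTop (nhds 0) := by
          simpa using hgL.sub (tendsto_const_nhds (x := L))
        simpa using h6.abs
      refine squeeze_zero_norm (fun n => ?_) habs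
      exact le_of_eq (by rw [norm_mul, he1 n, mul_one, Complex.norm_real, Real.norm_eq_abs])
    have heavg : Tendsto (fun N : ℕ => ((N : ℝ)⁻¹ : ℝ) • ∑ n ∈ Finset.range N, e n)
        atTop (nhds 0) := by
      have hb : |(-ω₀ : ℝ)| ≤ 2 * B := by
        rw [abs_neg, abs_of_pos hω₀pos]
        have := hB2 ω₀ hω₀
        linarith
      have := avg_exp_tendsto (-ω₀) s (fun h => hexp (-ω₀) hb h)
      rw [if_neg (by intro h; exact hω₀ne (by linarith [neg_eq_zero.mp h]))] at this
      exact this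
    have limA : Tendsto (fun N : ℕ => ((N : ℝ)⁻¹ : ℝ) • ∑ n ∈ Finset.range N, u n)
        atTop (nhds 0) := by
      have h1 : ∀ N : ℕ, ((N : ℝ)⁻¹ : ℝ) • ∑ n ∈ Finset.range N, u n
          = (((N : ℝ)⁻¹ : ℝ) • ∑ n ∈ Finset.range N, (((g n - L : ℝ)) : ℂ) * e n)
            + (L : ℂ) * (((N : ℝ)⁻¹ : ℝ) • ∑ n ∈ Finset.range N, e n) := by
        intro N
        rw [mul_smul_comm, ← smul_add, Finset.mul_sum, ← Finset.sum_add_distrib]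
        congr 1
        apply Finset.sum_congr rfl
        intro n _
        simp only [hudef]
        push_cast
        ring
      simp only [h1]
      have := (hw.cesaro_smul).add (heavg.const_mul (L : ℂ))
      simpa using this
    -- representation of u
    have hrepr : ∀ n : ℕ, u n = ∑ ω ∈ Ω,
        ((f ω / 2) * Complex.exp (Complex.I * ((ω - ω₀ : ℝ)) * ((n : ℝ) * s))
          + ((starRingEnd ℂ) (f ω) / 2)
              * Complex.exp (Complex.I * ((-ω - ω₀ : ℝ)) * ((n : ℝ) * s))) := by
      intro n
      have hzre : ∀ z : ℂ, ((z.re : ℝ) : ℂ) = (z + (starRingEnd ℂ) z) / 2 := by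
        intro z
        rw [Complex.add_conj]
        push_cast
        ring
      rw [hudef]
      simp only []
      rw [hzre, map_sum, add_div, Finset.sum_div, Finset.sum_div, add_mul,
        Finset.sum_mul, Finset.sum_mul, ← Finset.sum_add_distrib]
      apply Finset.sum_congr rfl
      intro ω hω
      rw [map_mul, conj_exp_I]
      have e1 : Complex.exp (Complex.I * ((ω - ω₀ : ℝ)) * ((n : ℝ) * s))
          = Complex.exp (Complex.I * ω * ((n : ℝ) * s)) * e n := by
        rw [hedef]
        rw [show (ω - ω₀ : ℝ) = ω + (-ω₀) by ring, exp_I_shift]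
      have e2 : Complex.exp (Complex.I * ((-ω - ω₀ : ℝ)) * ((n : ℝ) * s))
          = Complex.exp (Complex.I * ((-ω : ℝ)) * ((n : ℝ) * s)) * e n := by
        rw [hedef]
        rw [show (-ω - ω₀ : ℝ) = (-ω) + (-ω₀) by ring, exp_I_shift]
      rw [e1, e2]
      ring
    -- limit B : average of u tends to f ω₀ / 2
    have limB : Tendsto (fun N : ℕ => ((N : ℝ)⁻¹ : ℝ) • ∑ n ∈ Finset.range N, u n)
        atTop (nhds (f ω₀ / 2)) := by
      have hEq : ∀ N : ℕ, ((N : ℝ)⁻¹ : ℝ) • ∑ n ∈ Finset.range N, u n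
          = ∑ ω ∈ Ω,
              ((f ω / 2) * (((N : ℝ)⁻¹ : ℝ) • ∑ n ∈ Finset.range N,
                  Complex.exp (Complex.I * ((ω - ω₀ : ℝ)) * ((n : ℝ) * s)))
                + ((starRingEnd ℂ) (f ω) / 2) * (((N : ℝ)⁻¹ : ℝ) • ∑ n ∈ Finset.range N,
                  Complex.exp (Complex.I * ((-ω - ω₀ : ℝ)) * ((n : ℝ) * s)))) := by
        intro N
        simp only [hrepr]
        rw [Finset.sum_comm, Finset.smul_sum]
        apply Finset.sum_congr rfl
        intro ω _
        rw [Finset.sum_add_distrib, smul_add, ← Finset.mul_sum, ← Finset.mul_sum,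
          mul_smul_comm, mul_smul_comm]
      have hterm : ∀ ω ∈ Ω, Tendsto (fun N : ℕ =>
          (f ω / 2) * (((N : ℝ)⁻¹ : ℝ) • ∑ n ∈ Finset.range N,
              Complex.exp (Complex.I * ((ω - ω₀ : ℝ)) * ((n : ℝ) * s)))
            + ((starRingEnd ℂ) (f ω) / 2) * (((N : ℝ)⁻¹ : ℝ) • ∑ n ∈ Finset.range N,
              Complex.exp (Complex.I * ((-ω - ω₀ : ℝ)) * ((n : ℝ) * s))))
          atTop (nhds (if ω = ω₀ then f ω / 2 else 0)) := by
        intro ω hω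
        have hω0 := hΩ ω hω
        have hωB := hB2 ω hω
        have hω₀B := hB2 ω₀ hω₀
        have hb1 : |(ω - ω₀ : ℝ)| ≤ 2 * B := by
          rw [abs_le]; constructor <;> linarith
        have hb2 : |(-ω - ω₀ : ℝ)| ≤ 2 * B := by
          rw [abs_le]; constructor <;> linarith
        have h1 := avg_exp_tendsto (ω - ω₀) s (fun h => hexp _ hb1 h)
        have h2 := avg_exp_tendsto (-ω - ω₀) s (fun h => hexp _ hb2 h)
        have hne2 : (-ω - ω₀ : ℝ) ≠ 0 := by intro h; linarith
        rw [if_neg hne2] at h2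
        by_cases hcase : ω = ω₀
        · rw [if_pos (by rw [hcase]; ring)] at h1
          have := (h1.const_mul (f ω / 2)).add (h2.const_mul ((starRingEnd ℂ) (f ω) / 2))
          rw [if_pos hcase]
          simpa using this
        · rw [if_neg (sub_ne_zero.mpr hcase)] at h1
          have := (h1.const_mul (f ω / 2)).add (h2.const_mul ((starRingEnd ℂ) (f ω) / 2))
          rw [if_neg hcase]
          simpa using this
      have hval : (∑ ω ∈ Ω, if ω = ω₀ then f ω / 2 else 0) = f ω₀ / 2 := by
        rw [Finset.sum_ite_eq' Ω ω₀ (fun ω => f ω / 2), if_pos hω₀]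
      refine Tendsto.congr (fun N => (hEq N).symm) ?_
      rw [← hval]
      exact tendsto_finset_sum Ω hterm
    have hzero : (0 : ℂ) = f ω₀ / 2 := tendsto_nhds_unique limA limB
    have : f ω₀ = 0 := by
      field_simp at hzero
      simpa using hzero.symm
    exact this
  · intro h
    refine ⟨(∑ ω ∈ Ω, if ω = 0 then f ω else 0).re, ?_⟩
    have hconst : ∀ t : ℝ, (∑ ω ∈ Ω, f ω * Complex.exp (Complex.I * ω * t))
        = ∑ ω ∈ Ω, if ω = 0 then f ω else 0 := by
      intro t
      apply Finset.sum_congr rfl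
      intro ω hω
      by_cases h0 : ω = 0
      · subst h0; simp
      · simp [h0, h ω hω h0]
    have : (fun t : ℝ => (∑ ω ∈ Ω, f ω * Complex.exp (Complex.I * ω * t)).re)
        = fun _ : ℝ => (∑ ω ∈ Ω, if ω = 0 then f ω else 0).re := by
      funext t
      rw [hconst t]
    rw [this]
    exact tendsto_const_nhds
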